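/- Let p, λ ∈ ℝ satisfy cos(λπ/2) = (p−1)/(p+1), p ≠ −1, and suppose sin(λπ/4) ≠ 0, cos(λπ/4) ≠ 0, and cos(λπ/2) ≠ 0. Then the vector (C₂, C₃, C₄) with C₂ = cot(λπ/4) + tan(λπ/2), C₃ = 1, C₄ = tan(λπ/2) satisfies A(p,λ)·(C₂, C₃, C₄)ᵀ = (0,0,0)ᵀ; i.e., it is a nontrivial solution of the homogeneous system encoding the boundary and interface conditions. -/

import Mathlib

open Real

/-- The 3×3 matrix encoding the boundary and interface conditions of the Sturm–Liouville
problem for the interface problem on the quarter-circle sector with interface at θ = π/4. -/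
noncomputable def interfaceMatrix (p lam : ℝ) : Matrix (Fin 3) (Fin 3) ℝ :=
  !![0, -Real.sin (lam * π / 2), Real.cos (lam * π / 2);
     Real.sin (lam * π / 4), -Real.cos (lam * π / 4), -Real.sin (lam * π / 4);
     Real.cos (lam * π / 4), p * Real.sin (lam * π / 4), -p * Real.cos (lam * π / 4)]

/-- If cos(λπ/2) = (p−1)/(p+1) (the determinant condition), then
(C₂, C₃, C₄) = (cot(λπ/4) + tan(λπ/2), 1, tan(λπ/2)) is a nontrivial solution of the
homogeneous system A(p,λ)·(C₂,C₃,C₄)ᵀ = 0. -/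
theorem explicit_nontrivial_solution (p lam : ℝ) (hp : p ≠ -1)
    (hdet : Real.cos (lam * π / 2) = (p - 1) / (p + 1))
    (hsin : Real.sin (lam * π / 4) ≠ 0) (hcos : Real.cos (lam * π / 4) ≠ 0)
    (hcos2 : Real.cos (lam * π / 2) ≠ 0) :
    (interfaceMatrix p lam).mulVec
        ![Real.cot (lam * π / 4) + Real.tan (lam * π / 2), 1, Real.tan (lam * π / 2)] = 0 := by
  have hp1 : p + 1 ≠ 0 := fun h => hp (by linarith)
  have h2 : lam * π / 2 = 2 * (lam * π / 4) := by ring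
  set x := lam * π / 4 with hx
  have hS : Real.sin (lam * π / 2) = 2 * Real.sin x * Real.cos x := by
    rw [h2, Real.sin_two_mul]
  have hC : Real.cos (lam * π / 2) = Real.cos x ^ 2 - Real.sin x ^ 2 := by
    rw [h2, Real.cos_two_mul']
  have hpyth : Real.sin x ^ 2 + Real.cos x ^ 2 = 1 := Real.sin_sq_add_cos_sq x
  have hCval : Real.cos x ^ 2 - Real.sin x ^ 2 = (p - 1) / (p + 1) := by rw [← hC, hdet]
  have hCne : Real.cos x ^ 2 - Real.sin x ^ 2 ≠ 0 := by rw [← hC]; exact hcos2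
  have htan : Real.tan (lam * π / 2) =
      2 * Real.sin x * Real.cos x / (Real.cos x ^ 2 - Real.sin x ^ 2) := by
    rw [Real.tan_eq_sin_div_cos, hS, hC]
  have hcot : Real.cot x = Real.cos x / Real.sin x := Real.cot_eq_cos_div_sin x
  funext i
  fin_cases i <;>
    simp only [interfaceMatrix, Matrix.mulVec, dotProduct, Fin.sum_univ_three,
      Matrix.cons_val', Matrix.cons_val_zero, Matrix.cons_val_one, Matrix.head_cons,
      Matrix.empty_val', Matrix.cons_val_fin_one, Matrix.head_fin_const, Matrix.cons_val_two,
      Matrix.tail_cons, Pi.zero_apply, Matrix.of_apply, Fin.zero_eta, Fin.mk_one, Fin.reduceFinMk, hS, hC, htan, hcot]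
  · field_simp
    ring
  · field_simp
    ring
  · have hc2 : Real.cos x ^ 2 = p / (p + 1) := by
      field_simp at hCval ⊢
      linear_combination hCval/2 + (p+1)/2 * hpyth
    have hs2 : Real.sin x ^ 2 = 1 / (p + 1) := by
      field_simp at hCval ⊢
      linear_combination -hCval/2 + (p+1)/2 * hpyth
    field_simp
    replace hc2 : Real.cos x ^ 2 * (p + 1) = p := by
      field_simp at hc2; linarith [hc2]
    replace hs2 : Real.sin x ^ 2 * (p + 1) = 1 := by
      field_simp at hs2; linarith [hs2]
    have hcp : Real.cos x ^ 2 - p * Real.sin x ^ 2 = 0 := by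
      have h0 : (Real.cos x ^ 2 - p * Real.sin x ^ 2) * (p + 1) = 0 := by
        linear_combination hc2 - p * hs2
      rcases mul_eq_zero.mp h0 with h | h
      · exact h
      · exact absurd h hp1
    rw [← hx]
    linear_combination (Real.cos x ^ 2 + Real.sin x ^ 2) * hcp
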